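/- arXiv:2501.00594 — 4 statements merged into one kernel-verified Lean document; each statement's English description precedes it below -/
import Mathlib

section
/- For q ∈ {1,2,...}, a ≥ 1, b ≥ q/2, and c > 0, the function f(x) = Φ(-x)^{-q} x^{a-1} e^{-bx² - cx} on (0,∞) is integrable: ∫_0^∞ f(x) dx < ∞. -/
open MeasureTheory Real Set

/-- The standard normal cumulative distribution function. -/
noncomputable def stdNormalCDF (x : ℝ) : ℝ :=
  ∫ u in Set.Iio x, (Real.sqrt (2 * Real.pi))⁻¹ * Real.exp (-u ^ 2 / 2)

lemma gauss_integrable :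
    Integrable (fun u : ℝ => (Real.sqrt (2 * Real.pi))⁻¹ * Real.exp (-u ^ 2 / 2)) := by
  have h := (integrable_exp_neg_mul_sq (by norm_num : (0:ℝ) < 1/2)).const_mul
    (Real.sqrt (2 * Real.pi))⁻¹
  have he : (fun u : ℝ => (Real.sqrt (2 * Real.pi))⁻¹ * Real.exp (-u ^ 2 / 2))
      = fun u : ℝ => (Real.sqrt (2 * Real.pi))⁻¹ * Real.exp (-(1/2) * u ^ 2) := by
    funext u
    rw [show (-u ^ 2 / 2 : ℝ) = -(1/2) * u ^ 2 by ring]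
  rw [he]
  exact h

lemma stdNormalCDF_nonneg (y : ℝ) : 0 ≤ stdNormalCDF y :=
  setIntegral_nonneg measurableSet_Iio fun u _ => by positivity

lemma stdNormalCDF_mono : Monotone stdNormalCDF := by
  intro x y hxy
  refine setIntegral_mono_set gauss_integrable.integrableOn ?_ ?_
  · exact Filter.Eventually.of_forall fun u => by positivity
  · exact (Set.Iio_subset_Iio hxy).eventuallyLE

lemma stdNormalCDF_lb {x : ℝ} (hx : 1 ≤ x) :
    (Real.sqrt (2 * Real.pi))⁻¹ * Real.exp (-3/2) * (Real.exp (-x ^ 2 / 2) * x⁻¹)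
      ≤ stdNormalCDF (-x) := by
  have hx0 : (0:ℝ) < x := lt_of_lt_of_le one_pos hx
  have hxinv : 0 < x⁻¹ := inv_pos.mpr hx0
  have hstep2 : ((Real.sqrt (2 * Real.pi))⁻¹ * Real.exp (-x ^ 2 / 2 - 3/2)) *
      (volume (Set.Ioo (-x - x⁻¹) (-x))).toReal ≤
      ∫ u in Set.Ioo (-x - x⁻¹) (-x),
        (Real.sqrt (2 * Real.pi))⁻¹ * Real.exp (-u ^ 2 / 2) := by
    refine setIntegral_ge_of_const_le_real measurableSet_Ioo
      (ne_of_lt measure_Ioo_lt_top) ?_ gauss_integrable.integrableOn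
    intro u hu
    have h1 : -x - x⁻¹ < u := hu.1
    have h2 : u < -x := hu.2
    have hxx : x * x⁻¹ = 1 := mul_inv_cancel₀ (ne_of_gt hx0)
    have hxi1 : x⁻¹ ≤ 1 := by nlinarith
    have hu2 : u ^ 2 ≤ x ^ 2 + 3 := by
      nlinarith [mul_pos (by nlinarith : (0:ℝ) < x + x⁻¹ + u)
        (by nlinarith : (0:ℝ) < x + x⁻¹ - u)]
    have hexp : Real.exp (-x ^ 2 / 2 - 3/2) ≤ Real.exp (-u ^ 2 / 2) := by
      apply Real.exp_le_exp.mpr; linarith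
    have hs : (0:ℝ) < (Real.sqrt (2 * Real.pi))⁻¹ := by positivity
    exact mul_le_mul_of_nonneg_left hexp hs.le
  have hvol : (volume (Set.Ioo (-x - x⁻¹) (-x))).toReal = x⁻¹ := by
    rw [Real.volume_Ioo, ENNReal.toReal_ofReal (by linarith)]
    ring
  have hstep1 : (∫ u in Set.Ioo (-x - x⁻¹) (-x),
      (Real.sqrt (2 * Real.pi))⁻¹ * Real.exp (-u ^ 2 / 2)) ≤ stdNormalCDF (-x) := by
    refine setIntegral_mono_set gauss_integrable.integrableOn ?_ ?_
    · exact Filter.Eventually.of_forall fun u => by positivity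
    · exact Set.Ioo_subset_Iio_self.eventuallyLE
  have heq : (Real.sqrt (2 * Real.pi))⁻¹ * Real.exp (-3/2) * (Real.exp (-x ^ 2 / 2) * x⁻¹)
      = ((Real.sqrt (2 * Real.pi))⁻¹ * Real.exp (-x ^ 2 / 2 - 3/2)) *
        (volume (Set.Ioo (-x - x⁻¹) (-x))).toReal := by
    rw [hvol, show (-x ^ 2 / 2 - 3/2 : ℝ) = -x ^ 2 / 2 + (-3/2) by ring, Real.exp_add]
    ring
  rw [heq]
  exact le_trans hstep2 hstep1

/-- For `q ≥ 1`, `a ≥ 1`, `b ≥ q/2`, `c > 0`, the function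
`f(x) = Φ(-x)^{-q} x^{a-1} e^{-bx² - cx}` is integrable on `(0,∞)`. -/
theorem integrable_phi_pow_kernel (q : ℕ) (hq : 1 ≤ q) (a b c : ℝ)
    (ha : 1 ≤ a) (hb : (q : ℝ) / 2 ≤ b) (hc : 0 < c) :
    IntegrableOn
      (fun x : ℝ => (stdNormalCDF (-x)) ^ (-(q : ℝ)) * x ^ (a - 1) *
        Real.exp (-b * x ^ 2 - c * x))
      (Set.Ioi 0) := by
  set f : ℝ → ℝ := fun x : ℝ => (stdNormalCDF (-x)) ^ (-(q : ℝ)) * x ^ (a - 1) *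
    Real.exp (-b * x ^ 2 - c * x) with hfdef
  set K : ℝ := (Real.sqrt (2 * Real.pi))⁻¹ * Real.exp (-3/2) with hKdef
  have hq1 : (1:ℝ) ≤ (q:ℝ) := by exact_mod_cast hq
  have hb0 : 0 ≤ b := le_trans (by linarith) hb
  have hK : (0:ℝ) < K := by rw [hKdef]; positivity
  have hqneg : (-(q:ℝ)) ≤ 0 := neg_nonpos.mpr (by positivity)
  -- measurability
  have hΦmeas : Measurable stdNormalCDF := stdNormalCDF_mono.measurable
  have hmeas : Measurable f := by
    refine (((hΦmeas.comp measurable_neg).pow_const _).mul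
      (measurable_id'.pow_const _)).mul ?_
    fun_prop
  -- positivity of Φ(-2)
  have hΦ2pos : 0 < stdNormalCDF (-2) := by
    have hl := stdNormalCDF_lb (by norm_num : (1:ℝ) ≤ 2)
    have h0 : (0:ℝ) < (Real.sqrt (2 * Real.pi))⁻¹ * Real.exp (-3/2) *
        (Real.exp (-(2:ℝ) ^ 2 / 2) * (2:ℝ)⁻¹) := by positivity
    linarith
  -- nonnegativity of f
  have hfnn : ∀ x : ℝ, 0 < x → 0 ≤ f x := by
    intro x hx
    exact mul_nonneg (mul_nonneg (Real.rpow_nonneg (stdNormalCDF_nonneg _) _)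
      (Real.rpow_nonneg hx.le _)) (Real.exp_pos _).le
  -- integrable on (0,2]
  have h1 : IntegrableOn f (Set.Ioc 0 2) := by
    refine Measure.integrableOn_of_bounded
      (M := (stdNormalCDF (-2)) ^ (-(q:ℝ)) * (2:ℝ) ^ (a-1))
      measure_Ioc_lt_top.ne hmeas.aestronglyMeasurable ?_
    filter_upwards [ae_restrict_mem measurableSet_Ioc] with x hx
    obtain ⟨hx0, hx2⟩ := hx
    have hΦx : stdNormalCDF (-2) ≤ stdNormalCDF (-x) := stdNormalCDF_mono (by linarith)
    have e1 : (stdNormalCDF (-x)) ^ (-(q:ℝ)) ≤ (stdNormalCDF (-2)) ^ (-(q:ℝ)) :=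
      Real.rpow_le_rpow_of_nonpos hΦ2pos hΦx hqneg
    have e2 : x ^ (a-1) ≤ (2:ℝ) ^ (a-1) := Real.rpow_le_rpow hx0.le hx2 (by linarith)
    have e3 : Real.exp (-b * x ^ 2 - c * x) ≤ 1 := by
      rw [Real.exp_le_one_iff]
      nlinarith [sq_nonneg x, mul_pos hc hx0]
    rw [Real.norm_eq_abs, abs_of_nonneg (hfnn x hx0)]
    calc f x ≤ (stdNormalCDF (-2)) ^ (-(q:ℝ)) * (2:ℝ) ^ (a-1) * 1 := by
          refine mul_le_mul (mul_le_mul e1 e2 (Real.rpow_nonneg hx0.le _)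
            (Real.rpow_nonneg hΦ2pos.le _)) e3 (Real.exp_pos _).le ?_
          exact mul_nonneg (Real.rpow_nonneg hΦ2pos.le _)
            (Real.rpow_nonneg (by norm_num) _)
      _ = (stdNormalCDF (-2)) ^ (-(q:ℝ)) * (2:ℝ) ^ (a-1) := mul_one _
  -- integrable on (2,∞) by domination
  have hp0 : (0:ℝ) < (q:ℝ) + (a - 1) + 1 := by linarith
  have hbase : IntegrableOn (fun t : ℝ => Real.exp (-t) * t ^ ((q:ℝ) + (a - 1)))
      (Set.Ioi 0) := by
    have h := Real.GammaIntegral_convergent hp0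
    simpa using h
  have hcomp : IntegrableOn
      (fun x : ℝ => Real.exp (-(c * x)) * (c * x) ^ ((q:ℝ) + (a - 1))) (Set.Ioi 0) := by
    have h := (integrableOn_Ioi_comp_mul_left_iff
      (fun t : ℝ => Real.exp (-t) * t ^ ((q:ℝ) + (a - 1))) 0 hc).mpr
      (by rw [mul_zero]; exact hbase)
    exact h
  have hgint : IntegrableOn
      (fun x : ℝ => K ^ (-(q:ℝ)) * (x ^ ((q:ℝ) + (a - 1)) * Real.exp (-(c * x))))
      (Set.Ioi 0) := by
    have hcp : (0:ℝ) < c ^ ((q:ℝ) + (a - 1)) := Real.rpow_pos_of_pos hc _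
    have h := (hcomp.const_mul (K ^ (-(q:ℝ)) * (c ^ ((q:ℝ) + (a - 1)))⁻¹))
    refine IntegrableOn.congr_fun h ?_ measurableSet_Ioi
    intro x hx
    simp only
    rw [Real.mul_rpow hc.le (le_of_lt hx)]
    field_simp
  have h2 : IntegrableOn f (Set.Ioi 2) := by
    have hg2 : IntegrableOn
        (fun x : ℝ => K ^ (-(q:ℝ)) * (x ^ ((q:ℝ) + (a - 1)) * Real.exp (-(c * x))))
        (Set.Ioi 2) := hgint.mono_set (Set.Ioi_subset_Ioi (by norm_num))
    refine Integrable.mono' hg2 hmeas.aestronglyMeasurable ?_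
    filter_upwards [ae_restrict_mem measurableSet_Ioi] with x hx
    have hx2 : (2:ℝ) < x := hx
    have hx0 : (0:ℝ) < x := by linarith
    have hx1 : (1:ℝ) ≤ x := by linarith
    have hlb := stdNormalCDF_lb hx1
    have hLpos : (0:ℝ) < K * (Real.exp (-x ^ 2 / 2) * x⁻¹) := by
      have : (0:ℝ) < x⁻¹ := inv_pos.mpr hx0
      positivity
    have e1 : (stdNormalCDF (-x)) ^ (-(q:ℝ)) ≤
        K ^ (-(q:ℝ)) * (Real.exp ((q:ℝ) * x ^ 2 / 2) * x ^ ((q:ℝ))) := by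
      calc (stdNormalCDF (-x)) ^ (-(q:ℝ))
          ≤ (K * (Real.exp (-x ^ 2 / 2) * x⁻¹)) ^ (-(q:ℝ)) :=
            Real.rpow_le_rpow_of_nonpos hLpos hlb hqneg
        _ = K ^ (-(q:ℝ)) * (Real.exp ((q:ℝ) * x ^ 2 / 2) * x ^ ((q:ℝ))) := by
            rw [Real.mul_rpow hK.le (by positivity),
              Real.mul_rpow (Real.exp_pos _).le (inv_pos.mpr hx0).le,
              ← Real.exp_mul, Real.inv_rpow hx0.le, Real.rpow_neg hx0.le, inv_inv,
              show (-x ^ 2 / 2 * -(q:ℝ)) = (q:ℝ) * x ^ 2 / 2 by ring]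
    rw [Real.norm_eq_abs, abs_of_nonneg (hfnn x hx0)]
    calc f x = (stdNormalCDF (-x)) ^ (-(q:ℝ)) * x ^ (a - 1) *
          Real.exp (-b * x ^ 2 - c * x) := rfl
      _ ≤ (K ^ (-(q:ℝ)) * (Real.exp ((q:ℝ) * x ^ 2 / 2) * x ^ ((q:ℝ)))) * x ^ (a - 1) *
          Real.exp (-b * x ^ 2 - c * x) := by
          exact mul_le_mul_of_nonneg_right
            (mul_le_mul_of_nonneg_right e1 (Real.rpow_nonneg hx0.le _))
            (Real.exp_pos _).le
      _ = K ^ (-(q:ℝ)) * (x ^ ((q:ℝ) + (a - 1)) *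
          (Real.exp ((q:ℝ) * x ^ 2 / 2) * Real.exp (-b * x ^ 2 - c * x))) := by
          rw [Real.rpow_add hx0]
          ring
      _ ≤ K ^ (-(q:ℝ)) * (x ^ ((q:ℝ) + (a - 1)) * Real.exp (-(c * x))) := by
          have he : Real.exp ((q:ℝ) * x ^ 2 / 2) * Real.exp (-b * x ^ 2 - c * x) ≤
              Real.exp (-(c * x)) := by
            rw [← Real.exp_add, Real.exp_le_exp]
            nlinarith [mul_nonneg (by linarith : (0:ℝ) ≤ b - (q:ℝ)/2) (sq_nonneg x)]
          exact mul_le_mul_of_nonneg_left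
            (mul_le_mul_of_nonneg_left he (Real.rpow_nonneg hx0.le _))
            (Real.rpow_nonneg hK.le _)
  have hsplit : Set.Ioi (0:ℝ) ⊆ Set.Ioc 0 2 ∪ Set.Ioi 2 := by
    intro x hx
    rcases le_or_gt x 2 with h | h
    · exact Or.inl ⟨hx, h⟩
    · exact Or.inr h
  exact (h1.union h2).mono_set hsplit
end

section
/- For q ∈ {1,2,...}, a ≥ 1, b ≥ q/2, and c > 0, the function f(x) = Φ(-x)^{-q} x^{a-1} e^{-bx² - cx} is log-concave on (0,∞). -/
open MeasureTheory Real Set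

/-- Auxiliary integral: `I(x) = ∫_0^∞ e^{-xu - u²/2} du`. -/
noncomputable def auxI (x : ℝ) : ℝ :=
  ∫ u in Set.Ioi (0 : ℝ), Real.exp (-x * u - u ^ 2 / 2)

lemma auxI_integrableOn {x : ℝ} (hx : 0 ≤ x) :
    IntegrableOn (fun u => Real.exp (-x * u - u ^ 2 / 2)) (Set.Ioi (0 : ℝ)) volume := by
  have hg : IntegrableOn (fun u : ℝ => Real.exp (-(1/2) * u ^ 2)) (Set.Ioi (0 : ℝ)) volume :=
    (integrable_exp_neg_mul_sq (by norm_num)).integrableOn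
  have hcont : Continuous fun u : ℝ => Real.exp (-x * u - u ^ 2 / 2) := by fun_prop
  have hbd : ∀ᵐ u ∂(volume.restrict (Set.Ioi (0:ℝ))),
      ‖Real.exp (-x * u - u ^ 2 / 2)‖ ≤ ‖Real.exp (-(1/2) * u ^ 2)‖ := by
    refine (ae_restrict_iff' measurableSet_Ioi).2 (Filter.Eventually.of_forall fun u hu => ?_)
    rw [Real.norm_eq_abs, Real.norm_eq_abs, Real.abs_exp, Real.abs_exp, Real.exp_le_exp]
    have hu' : (0:ℝ) < u := hu
    nlinarith
  exact Integrable.mono hg hcont.aestronglyMeasurable hbd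

lemma auxI_pos {x : ℝ} (hx : 0 ≤ x) : 0 < auxI x := by
  have hsupp : (Function.support fun u : ℝ => Real.exp (-x * u - u ^ 2 / 2)) = Set.univ :=
    Set.eq_univ_of_forall fun u => (Real.exp_pos _).ne'
  rw [auxI, setIntegral_pos_iff_support_of_nonneg_ae
    (Filter.Eventually.of_forall fun u => (Real.exp_pos _).le) (auxI_integrableOn hx),
    hsupp, Set.univ_inter, Real.volume_Ioi]
  exact ENNReal.zero_lt_top

lemma stdNormalCDF_rep (x : ℝ) :
    stdNormalCDF (-x) = (Real.sqrt (2 * Real.pi))⁻¹ * Real.exp (-x ^ 2 / 2) * auxI x := by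
  have h1 : stdNormalCDF (-x)
      = ∫ u in Set.Iic (-x), (Real.sqrt (2 * Real.pi))⁻¹ * Real.exp (-u ^ 2 / 2) :=
    (integral_Iic_eq_integral_Iio' (measure_singleton _)).symm
  have h2 : (∫ u in Set.Ioi x, (Real.sqrt (2 * Real.pi))⁻¹ * Real.exp (-(-u) ^ 2 / 2))
      = ∫ u in Set.Iic (-x), (Real.sqrt (2 * Real.pi))⁻¹ * Real.exp (-u ^ 2 / 2) :=
    integral_comp_neg_Ioi x (fun u => (Real.sqrt (2 * Real.pi))⁻¹ * Real.exp (-u ^ 2 / 2))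
  have hpre : (fun u : ℝ => u + x) ⁻¹' Set.Ioi x = Set.Ioi 0 := by
    ext u; simp
  have h3 : (∫ u in Set.Ioi (0:ℝ), (Real.sqrt (2 * Real.pi))⁻¹ * Real.exp (-(u + x) ^ 2 / 2))
      = ∫ u in Set.Ioi x, (Real.sqrt (2 * Real.pi))⁻¹ * Real.exp (-u ^ 2 / 2) := by
    have := (measurePreserving_add_right volume x).setIntegral_preimage_emb
      (measurableEmbedding_addRight x)
      (fun u => (Real.sqrt (2 * Real.pi))⁻¹ * Real.exp (-u ^ 2 / 2)) (Set.Ioi x)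
    rwa [hpre] at this
  have h4 : (∫ u in Set.Ioi (0:ℝ), (Real.sqrt (2 * Real.pi))⁻¹ * Real.exp (-(u + x) ^ 2 / 2))
      = (Real.sqrt (2 * Real.pi))⁻¹ * Real.exp (-x ^ 2 / 2) * auxI x := by
    rw [auxI, mul_assoc, ← integral_const_mul, ← integral_const_mul]
    refine setIntegral_congr_fun measurableSet_Ioi fun u _ => ?_
    have harg : -(u + x) ^ 2 / 2 = -x ^ 2 / 2 + (-x * u - u ^ 2 / 2) := by ring
    rw [harg, Real.exp_add]
  have h5 : (∫ u in Set.Ioi x, (Real.sqrt (2 * Real.pi))⁻¹ * Real.exp (-(-u) ^ 2 / 2))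
      = ∫ u in Set.Ioi x, (Real.sqrt (2 * Real.pi))⁻¹ * Real.exp (-u ^ 2 / 2) := by
    refine setIntegral_congr_fun measurableSet_Ioi fun u _ => ?_
    rw [neg_sq]
  rw [h1, ← h2, h5, ← h3, h4]

lemma auxI_logconvex {x₁ x₂ t : ℝ} (hx₁ : 0 < x₁) (hx₂ : 0 < x₂) (ht0 : 0 < t) (ht1 : t < 1) :
    auxI ((1 - t) * x₁ + t * x₂) ≤ auxI x₁ ^ (1 - t) * auxI x₂ ^ t := by
  have hs : 0 < 1 - t := by linarith
  have hpq : Real.HolderConjugate (1 / (1 - t)) (1 / t) := by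
    rw [Real.holderConjugate_iff]
    constructor
    · rw [lt_div_iff₀ hs, one_mul]; linarith
    · rw [one_div, one_div, inv_inv, inv_inv]; ring
  set μ := volume.restrict (Set.Ioi (0:ℝ)) with hμ
  have hmem : ∀ x : ℝ, 0 < x → ∀ s : ℝ, 0 < s →
      MemLp (fun u => Real.exp (-x * u - u ^ 2 / 2) ^ s) (ENNReal.ofReal (1 / s)) μ := by
    intro x hx s hspos
    have hint : MemLp (fun u => Real.exp (-x * u - u ^ 2 / 2)) 1 μ :=
      memLp_one_iff_integrable.mpr (auxI_integrableOn hx.le)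
    have hqe : ENNReal.ofReal (1 / s) = 1 / ENNReal.ofReal s := by
      rw [one_div, one_div, ENNReal.ofReal_inv_of_pos hspos]
    rw [hqe]
    simpa [Real.norm_eq_abs, Real.abs_exp, ENNReal.toReal_ofReal hspos.le]
      using hint.norm_rpow_div (ENNReal.ofReal s)
  have h1 := integral_mul_le_Lp_mul_Lq_of_nonneg hpq
    (f := fun u => Real.exp (-x₁ * u - u ^ 2 / 2) ^ (1 - t))
    (g := fun u => Real.exp (-x₂ * u - u ^ 2 / 2) ^ t)
    (Filter.Eventually.of_forall fun u => Real.rpow_nonneg (Real.exp_pos _).le _)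
    (Filter.Eventually.of_forall fun u => Real.rpow_nonneg (Real.exp_pos _).le _)
    (hmem x₁ hx₁ (1 - t) hs) (hmem x₂ hx₂ t ht0)
  have heq : ∀ u : ℝ, Real.exp (-x₁ * u - u ^ 2 / 2) ^ (1 - t)
      * Real.exp (-x₂ * u - u ^ 2 / 2) ^ t
      = Real.exp (-((1 - t) * x₁ + t * x₂) * u - u ^ 2 / 2) := fun u => by
    rw [← Real.exp_mul, ← Real.exp_mul, ← Real.exp_add]
    congr 1; ring
  have heq1 : ∀ u : ℝ, (Real.exp (-x₁ * u - u ^ 2 / 2) ^ (1 - t)) ^ (1 / (1 - t))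
      = Real.exp (-x₁ * u - u ^ 2 / 2) := fun u => by
    rw [← Real.rpow_mul (Real.exp_pos _).le, mul_one_div_cancel hs.ne', Real.rpow_one]
  have heq2 : ∀ u : ℝ, (Real.exp (-x₂ * u - u ^ 2 / 2) ^ t) ^ (1 / t)
      = Real.exp (-x₂ * u - u ^ 2 / 2) := fun u => by
    rw [← Real.rpow_mul (Real.exp_pos _).le, mul_one_div_cancel ht0.ne', Real.rpow_one]
  simp only [heq, heq1, heq2, one_div_one_div] at h1
  exact h1

/-- For `q ≥ 1`, `a ≥ 1`, `b ≥ q/2`, `c > 0`, the function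
`f(x) = Φ(-x)^{-q} x^{a-1} e^{-bx² - cx}` is log-concave on `(0,∞)`:
`f(x₁)^(1-t) f(x₂)^t ≤ f((1-t)x₁ + t x₂)`. -/
theorem logConcave_phi_pow_kernel (q : ℕ) (hq : 1 ≤ q) (a b c : ℝ)
    (ha : 1 ≤ a) (hb : (q : ℝ) / 2 ≤ b) (hc : 0 < c)
    (f : ℝ → ℝ)
    (hf : ∀ x : ℝ, f x = (stdNormalCDF (-x)) ^ (-(q : ℝ)) * x ^ (a - 1) *
        Real.exp (-b * x ^ 2 - c * x))
    (x₁ x₂ t : ℝ) (hx₁ : 0 < x₁) (hx₂ : 0 < x₂) (ht : t ∈ Set.Icc (0 : ℝ) 1) :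
    f x₁ ^ (1 - t) * f x₂ ^ t ≤ f ((1 - t) * x₁ + t * x₂) := by
  obtain ⟨ht0, ht1⟩ := ht
  rcases eq_or_lt_of_le ht0 with h0 | ht0
  · rw [← h0]; norm_num
  rcases eq_or_lt_of_le ht1 with h1 | ht1
  · rw [h1]; norm_num
  have hK : (0:ℝ) < (Real.sqrt (2 * Real.pi))⁻¹ := by positivity
  have hΦpos : ∀ x : ℝ, 0 < x → 0 < stdNormalCDF (-x) := fun x hx => by
    rw [stdNormalCDF_rep]
    have hI := auxI_pos hx.le
    positivity
  have hfpos : ∀ x : ℝ, 0 < x → 0 < f x := fun x hx => by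
    rw [hf]
    have hΦ := hΦpos x hx
    positivity
  have hx₃ : 0 < (1 - t) * x₁ + t * x₂ := by nlinarith
  have flog : ∀ x : ℝ, 0 < x → Real.log (f x) =
      -(q:ℝ) * Real.log ((Real.sqrt (2 * Real.pi))⁻¹) + (q:ℝ) * (x ^ 2 / 2)
        - (q:ℝ) * Real.log (auxI x) + (a - 1) * Real.log x + (-b * x ^ 2 - c * x) := by
    intro x hx
    have hI := auxI_pos hx.le
    have hΦp := hΦpos x hx
    have h₁ : stdNormalCDF (-x) ^ (-(q:ℝ)) ≠ 0 := (Real.rpow_pos_of_pos hΦp _).ne'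
    have h₂ : x ^ (a - 1) ≠ 0 := (Real.rpow_pos_of_pos hx _).ne'
    rw [hf x, Real.log_mul (mul_ne_zero h₁ h₂) (Real.exp_ne_zero _), Real.log_mul h₁ h₂,
      Real.log_rpow hΦp, Real.log_rpow hx, Real.log_exp, stdNormalCDF_rep,
      Real.log_mul (mul_ne_zero hK.ne' (Real.exp_ne_zero _)) hI.ne',
      Real.log_mul hK.ne' (Real.exp_ne_zero _), Real.log_exp]
    ring
  have hLpos : 0 < f x₁ ^ (1 - t) * f x₂ ^ t :=
    mul_pos (Real.rpow_pos_of_pos (hfpos x₁ hx₁) _) (Real.rpow_pos_of_pos (hfpos x₂ hx₂) _)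
  rw [← Real.log_le_log_iff hLpos (hfpos _ hx₃),
    Real.log_mul (Real.rpow_pos_of_pos (hfpos x₁ hx₁) _).ne'
      (Real.rpow_pos_of_pos (hfpos x₂ hx₂) _).ne',
    Real.log_rpow (hfpos x₁ hx₁), Real.log_rpow (hfpos x₂ hx₂),
    flog x₁ hx₁, flog x₂ hx₂, flog _ hx₃]
  have key1 : Real.log (auxI ((1 - t) * x₁ + t * x₂))
      ≤ (1 - t) * Real.log (auxI x₁) + t * Real.log (auxI x₂) := by
    have h := Real.log_le_log (auxI_pos hx₃.le) (auxI_logconvex hx₁ hx₂ ht0 ht1)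
    rwa [Real.log_mul (Real.rpow_pos_of_pos (auxI_pos hx₁.le) _).ne'
        (Real.rpow_pos_of_pos (auxI_pos hx₂.le) _).ne',
      Real.log_rpow (auxI_pos hx₁.le), Real.log_rpow (auxI_pos hx₂.le)] at h
  have key2 : (1 - t) * Real.log x₁ + t * Real.log x₂
      ≤ Real.log ((1 - t) * x₁ + t * x₂) := by
    have h : (1 - t) • Real.log x₁ + t • Real.log x₂
        ≤ Real.log ((1 - t) • x₁ + t • x₂) :=
      strictConcaveOn_log_Ioi.concaveOn.2 (Set.mem_Ioi.2 hx₁) (Set.mem_Ioi.2 hx₂)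
        (by linarith) ht0.le (by ring)
    simpa [smul_eq_mul] using h
  have key3 : ((1 - t) * x₁ + t * x₂) ^ 2 ≤ (1 - t) * x₁ ^ 2 + t * x₂ ^ 2 := by
    nlinarith [sq_nonneg (x₁ - x₂), mul_nonneg ht0.le (sub_nonneg.2 ht1.le)]
  have hq' : (0:ℝ) ≤ (q:ℝ) := Nat.cast_nonneg q
  have ha' : (0:ℝ) ≤ a - 1 := by linarith
  have hb' : (0:ℝ) ≤ b - (q:ℝ)/2 := by linarith
  nlinarith [mul_le_mul_of_nonneg_left key1 hq', mul_le_mul_of_nonneg_left key2 ha',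
    mul_le_mul_of_nonneg_left key3 hb']
end

section
/- Let q ∈ {1,2,...}, a > 1, b = q/2, c > 0, and f(x) = Φ(-x)^{-q} x^{a-1} e^{-bx² - cx} on (0,∞). Then f has a unique mode x_*, and (a-1)/c < x_* < (a-1+q)/c. -/
open MeasureTheory Real Set Filter Topology

noncomputable def phiG (x : ℝ) : ℝ := (Real.sqrt (2 * Real.pi))⁻¹ * Real.exp (-x ^ 2 / 2)

noncomputable def PhicG (x : ℝ) : ℝ := ∫ u in Set.Ioi x, phiG u

lemma phiG_pos (x : ℝ) : 0 < phiG x := by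
  have h2 : (0:ℝ) < 2 * Real.pi := by positivity
  unfold phiG
  positivity

lemma phiG_cont : Continuous phiG := by
  unfold phiG; fun_prop

lemma phiG_even (x : ℝ) : phiG (-x) = phiG x := by simp [phiG, neg_sq]

lemma hasDerivAt_phiG (x : ℝ) : HasDerivAt phiG (-x * phiG x) x := by
  have h1 : HasDerivAt (fun y : ℝ => -y ^ 2 / 2) (-x) x := by
    have := (hasDerivAt_pow 2 x).neg.div_const 2
    refine this.congr_deriv ?_
    norm_num; ring
  have h2 := (h1.exp).const_mul (Real.sqrt (2 * Real.pi))⁻¹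
  refine h2.congr_deriv ?_
  unfold phiG; ring

lemma integrable_phiG : Integrable phiG := by
  have h : Integrable (fun x : ℝ => Real.exp (-(1/2 : ℝ) * x ^ 2)) :=
    integrable_exp_neg_mul_sq (by norm_num)
  have h2 := h.const_mul (Real.sqrt (2 * Real.pi))⁻¹
  refine h2.congr ?_
  filter_upwards with x
  unfold phiG
  ring_nf

lemma PhicG_eq (x : ℝ) : stdNormalCDF (-x) = PhicG x := by
  have h1 : stdNormalCDF (-x) = ∫ u in Set.Iic (-x), phiG u := by
    rw [stdNormalCDF, ← integral_Iic_eq_integral_Iio]; rfl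
  rw [h1, PhicG, ← integral_comp_neg_Ioi]
  congr 1; funext u; rw [phiG_even]

lemma PhicG_pos (x : ℝ) : 0 < PhicG x := by
  rw [PhicG]
  rw [setIntegral_pos_iff_support_of_nonneg_ae]
  · have : Function.support phiG = Set.univ := by
      ext y; simp [Function.mem_support, (phiG_pos y).ne']
    rw [this, Set.univ_inter]
    rw [Real.volume_Ioi]; exact ENNReal.zero_lt_top
  · filter_upwards with y using (phiG_pos y).le
  · exact integrable_phiG.integrableOn

lemma hasDerivAt_PhicG (x : ℝ) : HasDerivAt PhicG (-(phiG x)) x := by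
  have key : ∀ y : ℝ, PhicG y = ((∫ u, phiG u) - ∫ u in Set.Iic 0, phiG u) - ∫ t in (0:ℝ)..y, phiG t := by
    intro y
    have hsplit : (∫ u in Set.Iic y, phiG u) + ∫ u in Set.Ioi y, phiG u = ∫ u, phiG u := by
      rw [← compl_Iic]
      exact integral_add_compl measurableSet_Iic integrable_phiG
    have hsub : (∫ u in Set.Iic y, phiG u) - ∫ u in Set.Iic 0, phiG u = ∫ t in (0:ℝ)..y, phiG t :=
      intervalIntegral.integral_Iic_sub_Iic integrable_phiG.integrableOn integrable_phiG.integrableOn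
    rw [PhicG]
    linarith [hsplit, hsub]
  have hd : HasDerivAt (fun y => ∫ t in (0:ℝ)..y, phiG t) (phiG x) x := by
    refine intervalIntegral.integral_hasDerivAt_right
      (phiG_cont.intervalIntegrable _ _)
      phiG_cont.aestronglyMeasurable.stronglyMeasurableAtFilter
      phiG_cont.continuousAt
  have := (hd.const_sub ((∫ u, phiG u) - ∫ u in Set.Iic 0, phiG u))
  refine HasDerivAt.congr_of_eventuallyEq this ?_
  filter_upwards with y using (key y)
lemma phiG_tendsto_zero : Tendsto phiG atTop (𝓝 0) := by
  have h2 : Tendsto (fun x : ℝ => -x ^ 2 / 2) atTop atBot := by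
    have h : Tendsto (fun x : ℝ => x ^ 2 / 2) atTop atTop :=
      (tendsto_pow_atTop two_ne_zero).atTop_div_const (by norm_num)
    have := tendsto_neg_atBot_iff.2 h
    simpa [neg_div] using this
  have h : Tendsto (fun x : ℝ => Real.exp (-x ^ 2 / 2)) atTop (𝓝 0) :=
    Real.tendsto_exp_atBot.comp h2
  have h5 := h.const_mul (Real.sqrt (2 * Real.pi))⁻¹
  rw [mul_zero] at h5
  exact h5

lemma tendsto_mul_phiG : Tendsto (fun x : ℝ => x * phiG x) atTop (𝓝 0) := by
  have hb : Tendsto (fun x : ℝ => (Real.sqrt (2 * Real.pi))⁻¹ * Real.exp (-x)) atTop (𝓝 0) := by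
    have := (Real.tendsto_exp_neg_atTop_nhds_zero).const_mul (Real.sqrt (2 * Real.pi))⁻¹
    simpa using this
  apply squeeze_zero' ?_ ?_ hb
  · filter_upwards [eventually_ge_atTop (0:ℝ)] with x hx
    exact mul_nonneg hx (phiG_pos x).le
  · filter_upwards [eventually_ge_atTop (4:ℝ)] with x hx
    have hx0 : (0:ℝ) ≤ x := by linarith
    have h1 : x ≤ Real.exp x := by
      have := Real.add_one_le_exp x; linarith
    have h2 : x * phiG x ≤ (Real.sqrt (2 * Real.pi))⁻¹ * (Real.exp x * Real.exp (-x ^ 2 / 2)) := by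
      unfold phiG
      have hs : (0:ℝ) ≤ (Real.sqrt (2 * Real.pi))⁻¹ := by positivity
      have := mul_le_mul_of_nonneg_right h1 (Real.exp_nonneg (-x ^ 2 / 2))
      calc x * ((Real.sqrt (2 * Real.pi))⁻¹ * Real.exp (-x ^ 2 / 2))
          = (Real.sqrt (2 * Real.pi))⁻¹ * (x * Real.exp (-x ^ 2 / 2)) := by ring
        _ ≤ (Real.sqrt (2 * Real.pi))⁻¹ * (Real.exp x * Real.exp (-x ^ 2 / 2)) :=
            mul_le_mul_of_nonneg_left this hs
    have h3 : Real.exp x * Real.exp (-x ^ 2 / 2) ≤ Real.exp (-x) := by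
      rw [← Real.exp_add]
      apply Real.exp_le_exp.2
      nlinarith
    calc x * phiG x ≤ (Real.sqrt (2 * Real.pi))⁻¹ * (Real.exp x * Real.exp (-x ^ 2 / 2)) := h2
      _ ≤ (Real.sqrt (2 * Real.pi))⁻¹ * Real.exp (-x) := by
          apply mul_le_mul_of_nonneg_left h3 (by positivity)

lemma hasDerivAt_neg_phiG (t : ℝ) : HasDerivAt (fun s => -phiG s) (t * phiG t) t := by
  have := (hasDerivAt_phiG t).neg
  refine this.congr_deriv ?_; ring

lemma integrableOn_tphi (x : ℝ) (hx : 0 < x) :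
    IntegrableOn (fun t : ℝ => t * phiG t) (Set.Ioi x) := by
  refine integrableOn_Ioi_deriv_of_nonneg ?_ (fun t _ => hasDerivAt_neg_phiG t) ?_
    (phiG_tendsto_zero.neg)
  · exact ((phiG_cont.neg).continuousAt).continuousWithinAt
  · intro t ht
    exact mul_nonneg (le_of_lt (lt_trans hx ht)) (phiG_pos t).le

lemma integral_tphi (x : ℝ) (hx : 0 < x) : ∫ t in Set.Ioi x, t * phiG t = phiG x := by
  have := integral_Ioi_of_hasDerivAt_of_nonneg
    (((phiG_cont.neg).continuousAt).continuousWithinAt)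
    (fun t (_ : t ∈ Set.Ioi x) => hasDerivAt_neg_phiG t)
    (fun t ht => mul_nonneg (le_of_lt (lt_trans hx ht)) (phiG_pos t).le)
    (phiG_tendsto_zero.neg)
  simpa using this

lemma gordon_lower (x : ℝ) (hx : 0 < x) : x * PhicG x < phiG x := by
  have hint : IntegrableOn (fun t : ℝ => (t - x) * phiG t) (Set.Ioi x) := by
    have h1 := integrableOn_tphi x hx
    have h2 : IntegrableOn (fun t : ℝ => x * phiG t) (Set.Ioi x) :=
      (integrable_phiG.integrableOn).const_mul x
    refine (h1.sub h2).congr ?_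
    filter_upwards with t
    simp [Pi.sub_apply]; ring
  have key : 0 < ∫ t in Set.Ioi x, (t - x) * phiG t := by
    rw [setIntegral_pos_iff_support_of_nonneg_ae]
    · refine lt_of_lt_of_le ?_ (measure_mono (?_ : Set.Ioi x ⊆ _))
      · rw [Real.volume_Ioi]; exact ENNReal.zero_lt_top
      · intro t ht
        refine ⟨?_, ht⟩
        have : 0 < (t - x) * phiG t := mul_pos (by simpa using sub_pos.2 (Set.mem_Ioi.1 ht)) (phiG_pos t)
        exact Function.mem_support.2 this.ne'
    · filter_upwards [ae_restrict_mem measurableSet_Ioi] with t ht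
      exact mul_nonneg (sub_nonneg.2 (le_of_lt ht)) (phiG_pos t).le
    · exact hint
  have hsplit : ∫ t in Set.Ioi x, (t - x) * phiG t
      = (∫ t in Set.Ioi x, t * phiG t) - x * PhicG x := by
    have h2 : IntegrableOn (fun t : ℝ => x * phiG t) (Set.Ioi x) :=
      (integrable_phiG.integrableOn).const_mul x
    have : ∀ t : ℝ, (t - x) * phiG t = t * phiG t - x * phiG t := fun t => by ring
    rw [show (fun t : ℝ => (t - x) * phiG t) = fun t => t * phiG t - x * phiG t from funext this]
    rw [integral_sub (integrableOn_tphi x hx) h2, integral_const_mul, PhicG]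
  rw [hsplit, integral_tphi x hx] at key
  linarith
lemma hasDerivAt_neg_phiG_div (t : ℝ) (ht : 0 < t) :
    HasDerivAt (fun s => -(phiG s / s)) ((1 + t⁻¹ ^ 2) * phiG t) t := by
  have hd : HasDerivAt (fun s : ℝ => phiG s / s)
      ((-t * phiG t * t - phiG t * 1) / t ^ 2) t :=
    (hasDerivAt_phiG t).div (hasDerivAt_id t) ht.ne'
  have := hd.neg
  refine this.congr_deriv ?_
  have := ht.ne'
  field_simp
  ring

lemma tendsto_neg_phiG_div : Tendsto (fun s : ℝ => -(phiG s / s)) atTop (𝓝 0) := by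
  have h : Tendsto (fun s : ℝ => phiG s * s⁻¹) atTop (𝓝 (0 * 0)) :=
    phiG_tendsto_zero.mul tendsto_inv_atTop_zero
  rw [mul_zero] at h
  have := h.neg
  rw [neg_zero] at this
  refine this.congr ?_
  intro s; rw [div_eq_mul_inv]

lemma integrableOn_one_add_inv_sq_phi (x : ℝ) (hx : 0 < x) :
    IntegrableOn (fun t : ℝ => (1 + t⁻¹ ^ 2) * phiG t) (Set.Ioi x) := by
  refine integrableOn_Ioi_deriv_of_nonneg ?_
    (fun t ht => hasDerivAt_neg_phiG_div t (lt_trans hx ht)) ?_ tendsto_neg_phiG_div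
  · exact ((hasDerivAt_neg_phiG_div x hx).continuousAt).continuousWithinAt
  · intro t ht
    have : (0:ℝ) < 1 + t⁻¹ ^ 2 := by positivity
    exact le_of_lt (mul_pos this (phiG_pos t))

lemma integral_one_add_inv_sq_phi (x : ℝ) (hx : 0 < x) :
    ∫ t in Set.Ioi x, (1 + t⁻¹ ^ 2) * phiG t = phiG x / x := by
  have := integral_Ioi_of_hasDerivAt_of_nonneg
    (((hasDerivAt_neg_phiG_div x hx).continuousAt).continuousWithinAt)
    (fun t (ht : t ∈ Set.Ioi x) => hasDerivAt_neg_phiG_div t (lt_trans hx ht))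
    (fun t _ => le_of_lt (mul_pos (by positivity) (phiG_pos t)))
    tendsto_neg_phiG_div
  simpa using this

lemma gordon_upper (x : ℝ) (hx : 0 < x) : phiG x < (x + 1/x) * PhicG x := by
  have hint2 : IntegrableOn (fun t : ℝ => (1 + x⁻¹ ^ 2) * phiG t) (Set.Ioi x) :=
    (integrable_phiG.integrableOn).const_mul _
  have hint1 := integrableOn_one_add_inv_sq_phi x hx
  have hintd : IntegrableOn (fun t : ℝ => (x⁻¹ ^ 2 - t⁻¹ ^ 2) * phiG t) (Set.Ioi x) := by
    refine (hint2.sub hint1).congr ?_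
    filter_upwards with t
    simp [Pi.sub_apply]; ring
  have key : 0 < ∫ t in Set.Ioi x, (x⁻¹ ^ 2 - t⁻¹ ^ 2) * phiG t := by
    rw [setIntegral_pos_iff_support_of_nonneg_ae]
    · refine lt_of_lt_of_le ?_ (measure_mono (?_ : Set.Ioi x ⊆ _))
      · rw [Real.volume_Ioi]; exact ENNReal.zero_lt_top
      · intro t ht
        have htx : x < t := ht
        have h1 : t⁻¹ < x⁻¹ := by
          exact inv_strictAnti₀ hx htx
        have h2 : t⁻¹ ^ 2 < x⁻¹ ^ 2 := by
          have ht0 : 0 < t := lt_trans hx htx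
          have : (0:ℝ) ≤ t⁻¹ := by positivity
          nlinarith
        refine ⟨Function.mem_support.2 ?_, ht⟩
        exact (mul_pos (sub_pos.2 h2) (phiG_pos t)).ne'
    · filter_upwards [ae_restrict_mem measurableSet_Ioi] with t ht
      have h1 : t⁻¹ ≤ x⁻¹ := by
        exact le_of_lt (inv_strictAnti₀ hx ht)
      have ht0 : (0:ℝ) < t := lt_trans hx ht
      have : t⁻¹ ^ 2 ≤ x⁻¹ ^ 2 := by
        have h0 : (0:ℝ) ≤ t⁻¹ := inv_nonneg.2 ht0.le
        nlinarith
      exact mul_nonneg (sub_nonneg.2 this) (phiG_pos t).le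
    · exact hintd
  have hsplit : ∫ t in Set.Ioi x, (x⁻¹ ^ 2 - t⁻¹ ^ 2) * phiG t
      = (1 + x⁻¹ ^ 2) * PhicG x - phiG x / x := by
    have : (fun t : ℝ => (x⁻¹ ^ 2 - t⁻¹ ^ 2) * phiG t)
        = fun t : ℝ => (1 + x⁻¹ ^ 2) * phiG t - (1 + t⁻¹ ^ 2) * phiG t := by
      funext t; ring
    rw [this, integral_sub hint2 hint1, integral_const_mul,
      integral_one_add_inv_sq_phi x hx, PhicG]
  rw [hsplit] at key
  have h4 : phiG x / x < (1 + x⁻¹ ^ 2) * PhicG x := by linarith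
  have := (div_lt_iff₀ hx).1 h4
  calc phiG x = phiG x / x * x := by field_simp
    _ < (1 + x⁻¹ ^ 2) * PhicG x * x := by
        exact mul_lt_mul_of_pos_right h4 hx
    _ = (x + 1/x) * PhicG x := by field_simp
noncomputable def NG (x : ℝ) : ℝ := PhicG x ^ 2 + x * phiG x * PhicG x - phiG x ^ 2

lemma PhicG_cont : Continuous PhicG :=
  continuous_iff_continuousAt.2 fun x => (hasDerivAt_PhicG x).continuousAt

lemma PhicG_tendsto_zero : Tendsto PhicG atTop (𝓝 0) := by
  apply squeeze_zero' ?_ ?_ phiG_tendsto_zero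
  · filter_upwards with x using (PhicG_pos x).le
  · filter_upwards [eventually_ge_atTop (1:ℝ)] with x hx
    have h1 := gordon_lower x (by linarith)
    nlinarith [PhicG_pos x]

lemma NG_tendsto_zero : Tendsto NG atTop (𝓝 0) := by
  have h1 : Tendsto (fun x => PhicG x ^ 2) atTop (𝓝 0) := by
    have := PhicG_tendsto_zero.mul PhicG_tendsto_zero
    rw [mul_zero] at this
    refine this.congr fun x => (pow_two (PhicG x)).symm
  have h2 : Tendsto (fun x => x * phiG x * PhicG x) atTop (𝓝 0) := by
    have := tendsto_mul_phiG.mul PhicG_tendsto_zero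
    rw [mul_zero] at this
    exact this
  have h3 : Tendsto (fun x => phiG x ^ 2) atTop (𝓝 0) := by
    have := phiG_tendsto_zero.mul phiG_tendsto_zero
    rw [mul_zero] at this
    refine this.congr fun x => (pow_two (phiG x)).symm
  have := (h1.add h2).sub h3
  simp only [add_zero, sub_zero] at this
  exact this

lemma hasDerivAt_NG (x : ℝ) :
    HasDerivAt NG (x * phiG x ^ 2 - (1 + x ^ 2) * phiG x * PhicG x) x := by
  have h1 := hasDerivAt_PhicG x
  have h2 := hasDerivAt_phiG x
  have hA := h1.pow 2
  have hB := ((hasDerivAt_id x).mul h2).mul h1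
  have hC := h2.pow 2
  have := (hA.add hB).sub hC
  refine this.congr_deriv ?_
  simp only [Nat.cast_ofNat, pow_one, id_eq, one_mul, Pi.mul_apply]
  ring

lemma NG_pos (x : ℝ) (hx : 0 < x) : 0 < NG x := by
  have hanti : StrictAntiOn NG (Set.Ioi 0) := by
    refine strictAntiOn_of_deriv_neg (convex_Ioi 0) ?_ ?_
    · exact (continuous_iff_continuousAt.2 fun y => (hasDerivAt_NG y).continuousAt).continuousOn
    · intro y hy
      rw [interior_Ioi] at hy
      rw [(hasDerivAt_NG y).deriv]
      have hy0 : 0 < y := hy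
      have hg := gordon_upper y hy0
      have hphi := phiG_pos y
      have h : y * phiG y < (1 + y ^ 2) * PhicG y := by
        have := mul_lt_mul_of_pos_left hg hy0
        have heq : y * ((y + 1/y) * PhicG y) = (1 + y ^ 2) * PhicG y := by
          have h0 : y * (y + 1/y) = 1 + y ^ 2 := by
            have hy' : y ≠ 0 := hy0.ne'
            field_simp; ring
          calc y * ((y + 1/y) * PhicG y) = (y * (y + 1/y)) * PhicG y := by ring
            _ = (1 + y ^ 2) * PhicG y := by rw [h0]
        linarith
      nlinarith
  have hge : ∀ y, 0 < y → 0 ≤ NG y := by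
    intro y hy
    refine le_of_tendsto NG_tendsto_zero ?_
    filter_upwards [eventually_ge_atTop y] with t ht
    rcases eq_or_lt_of_le ht with rfl | hlt
    · exact le_rfl
    · exact (hanti hy (lt_trans hy hlt) hlt).le
  have := hanti (Set.mem_Ioi.2 hx) (Set.mem_Ioi.2 (by linarith : (0:ℝ) < x + 1)) (by linarith)
  have h0 := hge (x + 1) (by linarith)
  linarith

noncomputable def rG (x : ℝ) : ℝ := phiG x / PhicG x - x

lemma hasDerivAt_rG (x : ℝ) : HasDerivAt rG (-(NG x) / PhicG x ^ 2) x := by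
  have h1 := hasDerivAt_PhicG x
  have h2 := hasDerivAt_phiG x
  have hd := (h2.div h1 (PhicG_pos x).ne').sub (hasDerivAt_id x)
  refine hd.congr_deriv ?_
  have hΦ := (PhicG_pos x).ne'
  unfold NG
  field_simp [NG]
  ring

lemma rG_strictAntiOn : StrictAntiOn rG (Set.Ioi 0) := by
  refine strictAntiOn_of_deriv_neg (convex_Ioi 0) ?_ ?_
  · exact (continuous_iff_continuousAt.2 fun y => (hasDerivAt_rG y).continuousAt).continuousOn
  · intro y hy
    rw [interior_Ioi] at hy
    rw [(hasDerivAt_rG y).deriv]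
    have := NG_pos y hy
    have := PhicG_pos y
    apply div_neg_of_neg_of_pos <;> [linarith; positivity]

lemma rG_pos (x : ℝ) (hx : 0 < x) : 0 < rG x := by
  have h := gordon_lower x hx
  have hΦ := PhicG_pos x
  rw [rG, sub_pos, lt_div_iff₀ hΦ]
  linarith

lemma rG_lt (x : ℝ) (hx : 0 < x) : rG x < 1 / x := by
  have h := gordon_upper x hx
  have hΦ := PhicG_pos x
  rw [rG, sub_lt_iff_lt_add, div_lt_iff₀ hΦ]
  calc phiG x < (x + 1/x) * PhicG x := h
    _ = (1/x + x) * PhicG x := by ring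
/-- For `q ≥ 1`, `a > 1`, `b = q/2`, `c > 0`, the function
`f(x) = Φ(-x)^{-q} x^{a-1} e^{-bx² - cx}` has a unique mode `x⋆` on `(0,∞)`,
satisfying `(a-1)/c < x⋆ < (a-1+q)/c`. -/
theorem mode_bound_b_eq_half_q (q : ℕ) (hq : 1 ≤ q) (a b c : ℝ)
    (ha : 1 < a) (hb : b = (q : ℝ) / 2) (hc : 0 < c)
    (f : ℝ → ℝ)
    (hf : ∀ x : ℝ, f x = (stdNormalCDF (-x)) ^ (-(q : ℝ)) * x ^ (a - 1) *
        Real.exp (-b * x ^ 2 - c * x)) :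
    ∃ xs : ℝ, (xs ∈ Set.Ioi (0 : ℝ) ∧ IsMaxOn f (Set.Ioi 0) xs ∧
        (a - 1) / c < xs ∧ xs < (a - 1 + q) / c) ∧
      ∀ y ∈ Set.Ioi (0 : ℝ), IsMaxOn f (Set.Ioi 0) y → y = xs := by
  have hq0 : (0:ℝ) < (q:ℝ) := by
    have : 0 < q := by omega
    exact_mod_cast this
  have ha1 : (0:ℝ) < a - 1 := by linarith
  set x1 := (a-1)/c with hx1def
  set x2 := (a-1+q)/c with hx2def
  have hx1 : 0 < x1 := div_pos ha1 hc
  have hx12 : x1 < x2 := by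
    rw [hx1def, hx2def, div_lt_div_iff₀ hc hc]
    nlinarith
  set D : ℝ → ℝ := fun x => q * rG x + (a-1)/x - c with hD
  set g : ℝ → ℝ := fun x => -(q:ℝ) * Real.log (PhicG x) + (a-1) * Real.log x
      - b * x ^ 2 - c * x with hg
  have hgd : ∀ x : ℝ, 0 < x → HasDerivAt g (D x) x := by
    intro x hx
    have h1 : HasDerivAt (fun y => Real.log (PhicG y)) (-(phiG x) / PhicG x) x :=
      (hasDerivAt_PhicG x).log (PhicG_pos x).ne'
    have h2 : HasDerivAt Real.log x⁻¹ x := Real.hasDerivAt_log hx.ne'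
    have h3 : HasDerivAt (fun y : ℝ => y ^ 2) (2 * x) x := by
      simpa using hasDerivAt_pow 2 x
    have hder := (((h1.const_mul (-(q:ℝ))).add (h2.const_mul (a-1))).sub
      (h3.const_mul b)).sub ((hasDerivAt_id' (x := x)).const_mul c)
    have heq : -(q:ℝ) * (-(phiG x) / PhicG x) + (a-1) * x⁻¹ - b * (2 * x) - c * 1 = D x := by
      rw [hD, hb]
      simp only [rG]
      have hΦ : PhicG x ≠ 0 := (PhicG_pos x).ne'
      field_simp
      ring
    rw [← heq]
    exact hder
  have hDanti : StrictAntiOn D (Set.Ioi 0) := by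
    intro u hu v hv huv
    have h1 : rG v < rG u := rG_strictAntiOn hu hv huv
    have h2 : (a-1)/v < (a-1)/u := div_lt_div_of_pos_left ha1 hu huv
    simp only [hD]
    have := mul_lt_mul_of_pos_left h1 hq0
    linarith
  have hDcont : ContinuousOn D (Set.Icc x1 x2) := by
    intro y hy
    have hy0 : 0 < y := lt_of_lt_of_le hx1 hy.1
    apply ContinuousAt.continuousWithinAt
    have hrc : ContinuousAt rG y := (hasDerivAt_rG y).continuousAt
    exact ((hrc.const_mul _).add (continuousAt_const.div continuousAt_id hy0.ne')).sub
      continuousAt_const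
  have hD1 : 0 < D x1 := by
    have hcc : (a-1)/x1 = c := by
      rw [hx1def]; field_simp
    simp only [hD]; rw [hcc]
    have := rG_pos x1 hx1
    nlinarith
  have hD2 : D x2 < 0 := by
    have hx2pos : 0 < x2 := lt_trans hx1 hx12
    have hx2ne : x2 ≠ 0 := hx2pos.ne'
    have hsum : (q:ℝ) * (1/x2) + (a-1)/x2 - c = 0 := by
      rw [hx2def]
      have hnum : (0:ℝ) < a - 1 + q := by linarith
      field_simp
      ring
    have hr := rG_lt x2 hx2pos
    have hmul := mul_lt_mul_of_pos_left hr hq0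
    simp only [hD]
    linarith
  obtain ⟨xs, hxsmem, hxsval⟩ :=
    intermediate_value_Ioo' (le_of_lt hx12) hDcont (Set.mem_Ioo.2 ⟨hD2, hD1⟩)
  have hxs1 : x1 < xs := hxsmem.1
  have hxs2 : xs < x2 := hxsmem.2
  have hxs0 : 0 < xs := lt_trans hx1 hxs1
  have hgmono : StrictMonoOn g (Set.Ioc 0 xs) := by
    refine strictMonoOn_of_deriv_pos (convex_Ioc 0 xs) ?_ ?_
    · intro y hy; exact ((hgd y hy.1).continuousAt).continuousWithinAt
    · intro y hy
      rw [interior_Ioc] at hy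
      rw [(hgd y hy.1).deriv]
      have := hDanti (Set.mem_Ioi.2 hy.1) (Set.mem_Ioi.2 hxs0) hy.2
      rw [hxsval] at this
      linarith
  have hganti : StrictAntiOn g (Set.Ici xs) := by
    refine strictAntiOn_of_deriv_neg (convex_Ici xs) ?_ ?_
    · intro y hy; exact ((hgd y (lt_of_lt_of_le hxs0 hy)).continuousAt).continuousWithinAt
    · intro y hy
      rw [interior_Ici] at hy
      rw [(hgd y (lt_trans hxs0 hy)).deriv]
      have := hDanti (Set.mem_Ioi.2 hxs0) (Set.mem_Ioi.2 (lt_trans hxs0 hy)) hy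
      rw [hxsval] at this
      linarith
  have hfg : ∀ x : ℝ, 0 < x → f x = Real.exp (g x) := by
    intro x hx
    rw [hf x, PhicG_eq]
    rw [Real.rpow_def_of_pos (PhicG_pos x), Real.rpow_def_of_pos hx]
    rw [← Real.exp_add, ← Real.exp_add]
    simp only [hg]
    congr 1
    ring
  have hle : ∀ y, 0 < y → g y ≤ g xs := by
    intro y hy
    rcases le_or_gt y xs with h | h
    · rcases eq_or_lt_of_le h with rfl | h'
      · exact le_rfl
      · exact (hgmono (Set.mem_Ioc.2 ⟨hy, h⟩) (Set.mem_Ioc.2 ⟨hxs0, le_rfl⟩) h').le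
    · exact (hganti (Set.mem_Ici.2 le_rfl) (Set.mem_Ici.2 h.le) h).le
  have hmax : IsMaxOn f (Set.Ioi 0) xs := by
    intro y hy
    have hy0 : 0 < y := hy
    simp only [Set.mem_setOf_eq]
    rw [hfg y hy0, hfg xs hxs0]
    exact Real.exp_le_exp.2 (hle y hy0)
  refine ⟨xs, ⟨Set.mem_Ioi.2 hxs0, hmax, hxs1, hxs2⟩, ?_⟩
  intro y hy hymax
  have hy0 : 0 < y := hy
  by_contra hne
  have h1 : f y ≤ f xs := hmax hy
  have h2 : f xs ≤ f y := hymax (Set.mem_Ioi.2 hxs0)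
  have hgeq : g y = g xs := by
    have hfe : f y = f xs := le_antisymm h1 h2
    rw [hfg y hy0, hfg xs hxs0] at hfe
    exact Real.exp_eq_exp.1 hfe
  rcases lt_or_gt_of_ne hne with h | h
  · have := hgmono (Set.mem_Ioc.2 ⟨hy0, h.le⟩) (Set.mem_Ioc.2 ⟨hxs0, le_rfl⟩) h
    rw [hgeq] at this; exact lt_irrefl _ this
  · have := hganti (Set.mem_Ici.2 le_rfl) (Set.mem_Ici.2 h.le) h
    rw [hgeq] at this; exact lt_irrefl _ this
end

section
/- Let q ∈ {1,2,...}, a > 1, b > q/2, c > 0, and f(x) = Φ(-x)^{-q} x^{a-1} e^{-bx² - cx} on (0,∞). Then the unique mode x_* of f satisfies (√(c² + 4(a-1)(2b-q)) - c)/(2(2b-q)) < x_* < (√(c² + 4(a-1+q)(2b-q)) - c)/(2(2b-q)). -/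
open MeasureTheory Real Set
open Filter

noncomputable def gd (u : ℝ) : ℝ := (Real.sqrt (2 * Real.pi))⁻¹ * Real.exp (-u ^ 2 / 2)

lemma gd_pos (u : ℝ) : 0 < gd u := by
  have : (0:ℝ) < Real.sqrt (2 * Real.pi) := Real.sqrt_pos.2 (by positivity)
  exact mul_pos (inv_pos.2 this) (Real.exp_pos _)

lemma gd_cont : Continuous gd := by
  unfold gd; fun_prop

lemma gd_eq (u : ℝ) : gd u = (Real.sqrt (2 * Real.pi))⁻¹ * Real.exp (-(1/2) * u ^ 2) := by
  unfold gd; ring_nf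

lemma gd_integrable : Integrable gd := by
  have h := (integrable_exp_neg_mul_sq (b := 1/2) (by norm_num)).const_mul
      ((Real.sqrt (2 * Real.pi))⁻¹)
  exact h.congr (Filter.Eventually.of_forall fun u => (gd_eq u).symm)

lemma gd_deriv (u : ℝ) : HasDerivAt gd (-u * gd u) u := by
  have h1 : HasDerivAt (fun u : ℝ => -u ^ 2 / 2) (-u) u := by
    have := ((hasDerivAt_pow 2 u).neg).div_const 2
    simpa using this.congr_deriv (by ring)
  have := (h1.exp).const_mul ((Real.sqrt (2 * Real.pi))⁻¹)
  unfold gd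
  exact this.congr_deriv (by ring)

lemma stdNormalCDF_eq (x : ℝ) :
    stdNormalCDF x = stdNormalCDF 0 + ∫ u in (0:ℝ)..x, gd u := by
  have h : ∀ y : ℝ, stdNormalCDF y = ∫ u in Set.Iic y, gd u := by
    intro y
    unfold stdNormalCDF gd
    exact MeasureTheory.setIntegral_congr_set Iio_ae_eq_Iic
  rw [h, h, ← intervalIntegral.integral_Iic_sub_Iic gd_integrable.integrableOn
    gd_integrable.integrableOn]
  ring

lemma stdNormalCDF_hasDeriv (x : ℝ) : HasDerivAt stdNormalCDF (gd x) x := by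
  have : HasDerivAt (fun y => stdNormalCDF 0 + ∫ u in (0:ℝ)..y, gd u) (gd x) x := by
    refine HasDerivAt.const_add _ ?_
    exact intervalIntegral.integral_hasDerivAt_right
      (gd_integrable.intervalIntegrable)
      (gd_cont.stronglyMeasurableAtFilter _ _) gd_cont.continuousAt
  exact this.congr_of_eventuallyEq (Filter.Eventually.of_forall fun y => (stdNormalCDF_eq y))

lemma stdNormalCDF_pos (x : ℝ) : 0 < stdNormalCDF x := by
  have h : ∀ y : ℝ, stdNormalCDF y = ∫ u in Set.Iic y, gd u := fun y =>
    MeasureTheory.setIntegral_congr_set Iio_ae_eq_Iic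
  have h1 : stdNormalCDF x = stdNormalCDF (x-1) + ∫ u in (x-1)..x, gd u := by
    rw [h, h, ← intervalIntegral.integral_Iic_sub_Iic gd_integrable.integrableOn
      gd_integrable.integrableOn]
    ring
  have h2 : 0 ≤ stdNormalCDF (x-1) := by
    rw [h]
    exact MeasureTheory.setIntegral_nonneg measurableSet_Iic fun u _ => (gd_pos u).le
  have h3 : 0 < ∫ u in (x-1)..x, gd u :=
    intervalIntegral.intervalIntegral_pos_of_pos_on gd_integrable.intervalIntegrable
      (fun u _ => gd_pos u) (by linarith)
  linarith

noncomputable def Gt (x : ℝ) : ℝ := stdNormalCDF (-x)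

lemma Gt_pos (x : ℝ) : 0 < Gt x := stdNormalCDF_pos _

lemma Gt_hasDeriv (x : ℝ) : HasDerivAt Gt (-(gd x)) x := by
  have h := (stdNormalCDF_hasDeriv (-x)).comp x (hasDerivAt_neg x)
  have he : gd (-x) = gd x := by unfold gd; ring_nf
  unfold Gt
  exact h.congr_deriv (by rw [he]; ring)

lemma gd_even (x : ℝ) : gd (-x) = gd x := by unfold gd; ring_nf

lemma Gt_eq_integral (x : ℝ) : Gt x = ∫ u in Set.Ioi x, gd u := by
  have h1 : Gt x = ∫ u in Set.Iic (-x), gd u := by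
    unfold Gt stdNormalCDF
    exact MeasureTheory.setIntegral_congr_set Iio_ae_eq_Iic
  rw [h1, ← neg_neg x, ← integral_comp_neg_Iic, neg_neg]
  congr 1; funext u; exact (gd_even u).symm

lemma tendsto_gd : Tendsto gd atTop (nhds 0) := by
  have h : Tendsto (fun x : ℝ => -x ^ 2 / 2) atTop atBot := by
    apply Filter.Tendsto.atBot_div_const (by norm_num)
    exact tendsto_neg_atBot_iff.2 (tendsto_pow_atTop (by norm_num))
  have := (Real.tendsto_exp_atBot.comp h).const_mul ((Real.sqrt (2 * Real.pi))⁻¹)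
  rw [mul_zero] at this
  refine this.congr fun x => ?_
  simp only [Function.comp]
  unfold gd; ring_nf

lemma tendsto_x_gd : Tendsto (fun x => x * gd x) atTop (nhds 0) := by
  have key : Tendsto (fun x : ℝ => x ^ 2 * Real.exp (-(x^2/2))) atTop (nhds 0) := by
    have h1 : Tendsto (fun y : ℝ => (2*y) * Real.exp (-y)) atTop (nhds 0) := by
      have := (Real.tendsto_pow_mul_exp_neg_atTop_nhds_zero 1).const_mul 2
      simpa [mul_assoc] using this
    have h2 : Tendsto (fun x : ℝ => x^2/2) atTop atTop := by
      apply Filter.Tendsto.atTop_div_const (by norm_num)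
      exact tendsto_pow_atTop (by norm_num)
    have := h1.comp h2
    refine this.congr fun x => ?_
    simp only [Function.comp]
    ring
  -- squeeze: for x ≥ 1, 0 ≤ x * gd x ≤ x^2 * gd x
  have hle : ∀ᶠ x in atTop, x * gd x ≤ (Real.sqrt (2 * Real.pi))⁻¹ * (x ^ 2 * Real.exp (-(x^2/2))) := by
    filter_upwards [eventually_ge_atTop (1:ℝ)] with x hx
    have : x * gd x ≤ x^2 * gd x := by
      nlinarith [gd_pos x, sq_nonneg (x-1)]
    calc x * gd x ≤ x^2 * gd x := this
      _ = (Real.sqrt (2 * Real.pi))⁻¹ * (x ^ 2 * Real.exp (-(x^2/2))) := by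
          unfold gd; ring_nf
  have hge : ∀ᶠ x in atTop, 0 ≤ x * gd x := by
    filter_upwards [eventually_ge_atTop (0:ℝ)] with x hx
    exact mul_nonneg hx (gd_pos x).le
  have := key.const_mul ((Real.sqrt (2 * Real.pi))⁻¹)
  rw [mul_zero] at this
  exact tendsto_of_tendsto_of_tendsto_of_le_of_le' tendsto_const_nhds this hge hle

lemma neg_gd_deriv (u : ℝ) : HasDerivAt (fun v => -gd v) (u * gd u) u := by
  have := (gd_deriv u).neg
  exact this.congr_deriv (by ring)

lemma integrableOn_id_mul_gd {x : ℝ} (hx : 0 ≤ x) :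
    IntegrableOn (fun u => u * gd u) (Set.Ioi x) := by
  refine integrableOn_Ioi_deriv_of_nonneg' (g := fun u => -gd u) (l := 0) (a := x)
    (fun u _ => neg_gd_deriv u) (fun u hu => mul_nonneg (hx.trans hu.le) (gd_pos u).le) ?_
  simpa using tendsto_gd.neg

lemma integral_id_mul_gd {x : ℝ} (hx : 0 ≤ x) :
    ∫ u in Set.Ioi x, u * gd u = gd x := by
  have := integral_Ioi_of_hasDerivAt_of_nonneg' (g := fun u => -gd u) (l := 0) (a := x)
    (fun u _ => neg_gd_deriv u) (fun u hu => mul_nonneg (hx.trans hu.le) (gd_pos u).le)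
    (by simpa using tendsto_gd.neg)
  rw [this]; ring

lemma gordon_weak {x : ℝ} (hx : 0 ≤ x) : x * Gt x ≤ gd x := by
  rw [← integral_id_mul_gd hx, Gt_eq_integral, ← integral_const_mul]
  refine setIntegral_mono_on ((gd_integrable.const_mul x).integrableOn)
    (integrableOn_id_mul_gd hx) measurableSet_Ioi ?_
  intro u hu
  exact mul_le_mul_of_nonneg_right (le_of_lt hu) (gd_pos u).le

lemma tendsto_Gt : Tendsto Gt atTop (nhds 0) := by
  refine tendsto_of_tendsto_of_tendsto_of_le_of_le' tendsto_const_nhds tendsto_gd ?_ ?_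
  · filter_upwards with x using (Gt_pos x).le
  · filter_upwards [eventually_ge_atTop (1:ℝ)] with x hx
    calc Gt x ≤ x * Gt x := le_mul_of_one_le_left (Gt_pos x).le hx
      _ ≤ gd x := gordon_weak (by linarith)

lemma tendsto_x_Gt : Tendsto (fun x => x * Gt x) atTop (nhds 0) := by
  refine tendsto_of_tendsto_of_tendsto_of_le_of_le' tendsto_const_nhds tendsto_gd ?_ ?_
  · filter_upwards [eventually_ge_atTop (0:ℝ)] with x hx
    exact mul_nonneg hx (Gt_pos x).le
  · filter_upwards [eventually_ge_atTop (0:ℝ)] with x hx using gordon_weak hx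

lemma tendsto_x2_Gt : Tendsto (fun x => x ^ 2 * Gt x) atTop (nhds 0) := by
  refine tendsto_of_tendsto_of_tendsto_of_le_of_le' tendsto_const_nhds tendsto_x_gd ?_ ?_
  · filter_upwards [eventually_ge_atTop (0:ℝ)] with x hx
    exact mul_nonneg (by positivity) (Gt_pos x).le
  · filter_upwards [eventually_ge_atTop (0:ℝ)] with x hx
    have := gordon_weak hx
    nlinarith [Gt_pos x]

/-- If `F` has negative derivative everywhere and tends to `0` at `+∞`, then `F > 0`. -/
lemma pos_of_deriv_neg_tendsto {F F' : ℝ → ℝ} (h : ∀ y, HasDerivAt F (F' y) y)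
    (hneg : ∀ y, F' y < 0) (hlim : Tendsto F atTop (nhds 0)) (x : ℝ) : 0 < F x := by
  have hanti : StrictAnti F := strictAnti_of_deriv_neg
    (fun y => by rw [(h y).deriv]; exact hneg y)
  have h1 : (0:ℝ) ≤ F (x + 1) := by
    refine le_of_tendsto hlim ?_
    filter_upwards [eventually_ge_atTop (x+1)] with z hz
    rcases eq_or_lt_of_le hz with rfl | hlt
    · exact le_refl _
    · exact (hanti hlt).le
  have := hanti (show x < x + 1 by linarith)
  linarith

lemma gordon_lower_s8 (x : ℝ) : x * Gt x < gd x := by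
  have := pos_of_deriv_neg_tendsto (F := fun y => gd y - y * Gt y)
    (F' := fun y => -Gt y) ?_ ?_ ?_ x
  · linarith
  · intro y
    have h1 := (gd_deriv y).sub (((hasDerivAt_id y).mul (Gt_hasDeriv y)))
    exact h1.congr_deriv (by simp only [id]; ring)
  · intro y; simpa using Gt_pos y
  · simpa using tendsto_gd.sub tendsto_x_Gt

lemma AU_deriv (y : ℝ) :
    HasDerivAt (fun v => (v^2+1) * Gt v - v * gd v) (2*y*Gt y - 2*gd y) y := by
  have h1 : HasDerivAt (fun v : ℝ => v^2+1) (2*y) y := by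
    simpa using ((hasDerivAt_pow 2 y).add_const 1)
  have h := (h1.mul (Gt_hasDeriv y)).sub ((hasDerivAt_id y).mul (gd_deriv y))
  exact h.congr_deriv (by simp only [id]; ring)

lemma gordon_upper_s8 (x : ℝ) : x * gd x < (x^2+1) * Gt x := by
  have := pos_of_deriv_neg_tendsto (F := fun v => (v^2+1) * Gt v - v * gd v)
    (F' := fun v => 2*v*Gt v - 2*gd v) AU_deriv ?_ ?_ x
  · linarith
  · intro y; show 2*y*Gt y - 2*gd y < 0; have := gordon_lower_s8 y; linarith
  · have h1 : Tendsto (fun v => (v^2+1) * Gt v) atTop (nhds 0) := by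
      have := tendsto_x2_Gt.add tendsto_Gt
      rw [add_zero] at this
      exact this.congr fun v => by ring
    simpa using h1.sub tendsto_x_gd

lemma hazard_bound (x : ℝ) : gd x ^ 2 - x * gd x * Gt x < Gt x ^ 2 := by
  have := pos_of_deriv_neg_tendsto
    (F := fun v => Gt v^2 + v * gd v * Gt v - gd v^2)
    (F' := fun v => -(gd v * ((v^2+1) * Gt v - v * gd v))) ?_ ?_ ?_ x
  · linarith
  · intro y
    have h1 := ((Gt_hasDeriv y).pow 2).add
      ((((hasDerivAt_id y).mul (gd_deriv y)).mul (Gt_hasDeriv y)))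
    have h2 := h1.sub ((gd_deriv y).pow 2)
    exact h2.congr_deriv (by simp only [id, Pi.mul_apply]; ring)
  · intro y
    show -(gd y * ((y^2+1) * Gt y - y * gd y)) < 0
    have h := gordon_upper_s8 y
    have := gd_pos y
    nlinarith
  · have h1 : Tendsto (fun v => Gt v^2) atTop (nhds 0) := by
      simpa using tendsto_Gt.pow 2
    have h2 : Tendsto (fun v => v * gd v * Gt v) atTop (nhds 0) := by
      simpa using tendsto_x_gd.mul tendsto_Gt
    have h3 : Tendsto (fun v => gd v^2) atTop (nhds 0) := by
      simpa using tendsto_gd.pow 2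
    simpa using (h1.add h2).sub h3

noncomputable def Lf (q : ℕ) (a b c : ℝ) (x : ℝ) : ℝ :=
  -(q:ℝ) * Real.log (Gt x) + (a-1) * Real.log x - b*x^2 - c*x

noncomputable def Df (q : ℕ) (a b c : ℝ) (x : ℝ) : ℝ :=
  (q:ℝ) * (gd x / Gt x) + (a-1)/x - 2*b*x - c

lemma L_hasDeriv (q : ℕ) (a b c : ℝ) {x : ℝ} (hx : 0 < x) :
    HasDerivAt (Lf q a b c) (Df q a b c x) x := by
  have h1 : HasDerivAt (fun v => Real.log (Gt v)) (-(gd x)/Gt x) x :=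
    (Gt_hasDeriv x).log (Gt_pos x).ne'
  have h2 := Real.hasDerivAt_log hx.ne'
  have h4 := (((h1.const_mul (-(q:ℝ))).add (h2.const_mul (a-1))).sub
      ((hasDerivAt_pow 2 x).const_mul b)).sub ((hasDerivAt_id' (𝕜 := ℝ) x).const_mul c)
  have hGt := (Gt_pos x).ne'
  exact h4.congr_deriv (by unfold Df; field_simp; ring)

lemma D_hasDeriv (q : ℕ) (a b c : ℝ) {x : ℝ} (hx : 0 < x) :
    HasDerivAt (Df q a b c)
      ((q:ℝ) * (((gd x/Gt x))^2 - x*(gd x/Gt x)) - (a-1)/x^2 - 2*b) x := by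
  have hr : HasDerivAt (fun v => gd v / Gt v)
      ((-x * gd x * Gt x - gd x * -(gd x)) / (Gt x)^2) x :=
    (gd_deriv x).div (Gt_hasDeriv x) (Gt_pos x).ne'
  have h2 : HasDerivAt (fun v : ℝ => (a-1)/v) (-((a-1)/x^2)) x := by
    have := ((hasDerivAt_inv hx.ne').const_mul (a-1))
    refine this.congr_deriv ?_
    field_simp
  have h4 := (((hr.const_mul (q:ℝ)).add h2).sub
      ((hasDerivAt_id' (𝕜 := ℝ) x).const_mul (2*b))).sub (hasDerivAt_const x c)
  have heq : Df q a b c = fun v => ((q:ℝ) * (gd v / Gt v) + (a-1)/v) - 2*b*v - c := by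
    funext v; unfold Df; ring
  rw [heq]
  refine h4.congr_deriv ?_
  have hGt := (Gt_pos x).ne'
  have hx' := hx.ne'
  field_simp
  ring

lemma D_strictAntiOn (q : ℕ) (hq : 1 ≤ q) (a b c : ℝ) (ha : 1 < a) (hb : (q:ℝ)/2 < b) :
    StrictAntiOn (Df q a b c) (Set.Ioi 0) := by
  refine strictAntiOn_of_deriv_neg (convex_Ioi 0) ?_ ?_
  · intro x hx
    exact ((D_hasDeriv q a b c hx).continuousAt).continuousWithinAt
  · intro x hx
    rw [interior_Ioi] at hx
    rw [(D_hasDeriv q a b c hx).deriv]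
    have hGt := Gt_pos x
    have hrr : (gd x/Gt x)^2 - x*(gd x/Gt x) < 1 := by
      have heq : (gd x/Gt x)^2 - x*(gd x/Gt x) = (gd x ^2 - x * gd x * Gt x)/Gt x^2 := by
        field_simp [(Gt_pos x).ne']
      rw [heq, div_lt_one (pow_pos (Gt_pos x) 2)]
      exact hazard_bound x
    have hq1 : (1:ℝ) ≤ (q:ℝ) := by exact_mod_cast hq
    have h1 : (q:ℝ) * ((gd x/Gt x)^2 - x*(gd x/Gt x)) < (q:ℝ) := by
      nlinarith
    have h2 : 0 < (a-1)/x^2 := div_pos (by linarith) (pow_pos hx 2)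
    linarith

lemma root_aux {B c d : ℝ} (hB : 0 < B) (hc : 0 < c) (hd : 0 < d) :
    0 < (Real.sqrt (c^2+4*d*B) - c)/(2*B) ∧
      B*((Real.sqrt (c^2+4*d*B)-c)/(2*B))^2 + c*((Real.sqrt (c^2+4*d*B)-c)/(2*B)) = d := by
  have hnn : (0:ℝ) ≤ c^2+4*d*B := by nlinarith
  have hs2 : Real.sqrt (c^2+4*d*B) ^ 2 = c^2+4*d*B := Real.sq_sqrt hnn
  have hcs : c < Real.sqrt (c^2+4*d*B) := by
    have h := Real.sqrt_lt_sqrt (sq_nonneg c) (show c^2 < c^2+4*d*B by nlinarith)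
    rwa [Real.sqrt_sq hc.le] at h
  constructor
  · apply div_pos (by linarith) (by linarith)
  · generalize Real.sqrt (c^2+4*d*B) = s at hs2 ⊢
    field_simp
    nlinarith [hs2]

lemma f_eq_exp (q : ℕ) (a b c : ℝ) {x : ℝ} (hx : 0 < x) :
    (Gt x) ^ (-(q : ℝ)) * x ^ (a - 1) * Real.exp (-b * x ^ 2 - c * x)
      = Real.exp (Lf q a b c x) := by
  rw [Real.rpow_def_of_pos (Gt_pos x), Real.rpow_def_of_pos hx, ← Real.exp_add, ← Real.exp_add]
  unfold Lf
  congr 1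
  ring

/-- For `q ≥ 1`, `a > 1`, `b > q/2`, `c > 0`, the unique mode `x⋆` of
`f(x) = Φ(-x)^{-q} x^{a-1} e^{-bx² - cx}` on `(0,∞)` satisfies
`(√(c² + 4(a-1)(2b-q)) - c)/(2(2b-q)) < x⋆ < (√(c² + 4(a-1+q)(2b-q)) - c)/(2(2b-q))`. -/
theorem mode_bound_b_gt_half_q (q : ℕ) (hq : 1 ≤ q) (a b c : ℝ)
    (ha : 1 < a) (hb : (q : ℝ) / 2 < b) (hc : 0 < c)
    (f : ℝ → ℝ)
    (hf : ∀ x : ℝ, f x = (stdNormalCDF (-x)) ^ (-(q : ℝ)) * x ^ (a - 1) *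
        Real.exp (-b * x ^ 2 - c * x)) :
    ∃ xs : ℝ, (xs ∈ Set.Ioi (0 : ℝ) ∧ IsMaxOn f (Set.Ioi 0) xs ∧
        (Real.sqrt (c ^ 2 + 4 * (a - 1) * (2 * b - q)) - c) / (2 * (2 * b - q)) < xs ∧
        xs < (Real.sqrt (c ^ 2 + 4 * (a - 1 + q) * (2 * b - q)) - c) / (2 * (2 * b - q))) ∧
      ∀ y ∈ Set.Ioi (0 : ℝ), IsMaxOn f (Set.Ioi 0) y → y = xs := by
  have hq1 : (1:ℝ) ≤ (q:ℝ) := by exact_mod_cast hq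
  have hB : 0 < 2*b - (q:ℝ) := by linarith
  set B := 2*b - (q:ℝ) with hBdef
  set xL := (Real.sqrt (c^2+4*(a-1)*B) - c)/(2*B) with hxLdef
  set xU := (Real.sqrt (c^2+4*(a-1+q)*B) - c)/(2*B) with hxUdef
  obtain ⟨hxLpos, hxLroot⟩ := root_aux (d := a-1) hB hc (by linarith)
  obtain ⟨hxUpos, hxUroot⟩ := root_aux (d := a-1+q) hB hc (by linarith)
  have hfexp : ∀ x : ℝ, 0 < x → f x = Real.exp (Lf q a b c x) := by
    intro x hx
    rw [hf x, ← f_eq_exp q a b c hx]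
    rfl
  -- sign of D at the roots
  have hxLpos' : 0 < xL := hxLpos
  have hxUpos' : 0 < xU := hxUpos
  have hxLroot' : B*xL^2 + c*xL = a-1 := hxLroot
  have hxUroot' : B*xU^2 + c*xU = a-1+(q:ℝ) := hxUroot
  have hqpos : (0:ℝ) < (q:ℝ) := by linarith
  clear hxLpos hxUpos hxLroot hxUroot
  clear_value xL xU B
  subst hBdef
  have hDxL : 0 < Df q a b c xL := by
    have hGt := Gt_pos xL
    have hr : xL < gd xL / Gt xL := by
      rw [lt_div_iff₀ hGt]; exact gordon_lower_s8 xL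
    have h1 : (a-1)/xL = (2*b-(q:ℝ))*xL + c := by
      rw [div_eq_iff hxLpos'.ne']; nlinarith [hxLroot']
    unfold Df
    rw [h1]
    have hmul := mul_lt_mul_of_pos_left hr hqpos
    linarith [hmul]
  have hDxU : Df q a b c xU < 0 := by
    have hGt := Gt_pos xU
    have hr : gd xU / Gt xU < xU + 1/xU := by
      have hinv : (1/xU) * xU = 1 := one_div_mul_cancel hxUpos'.ne'
      have e : (xU + 1/xU) * Gt xU * xU = (xU^2+1) * Gt xU := by
        linear_combination Gt xU * hinv
      rw [div_lt_iff₀ hGt]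
      nlinarith [gordon_upper_s8 xU, e, hxUpos', hGt]
    have h1 : (a-1+(q:ℝ))/xU = (2*b-(q:ℝ))*xU + c := by
      rw [div_eq_iff hxUpos'.ne']; nlinarith [hxUroot']
    have h2 : (a-1)/xU = (a-1+(q:ℝ))/xU - (q:ℝ)/xU := by
      rw [← sub_div]; ring_nf
    unfold Df
    rw [h2, h1]
    have hmul := mul_lt_mul_of_pos_left hr hqpos
    have hq2 : (q:ℝ) * (xU + 1/xU) = (q:ℝ)*xU + (q:ℝ)/xU := by
      field_simp
    linarith [hmul, hq2]
  have hanti := D_strictAntiOn q hq a b c ha hb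
  have hxLU : xL < xU := by
    by_contra hle
    push_neg at hle
    rcases eq_or_lt_of_le hle with heq | hlt
    · rw [heq] at hDxU; linarith
    · have := hanti (Set.mem_Ioi.mpr hxUpos') (Set.mem_Ioi.mpr hxLpos') hlt
      linarith
  have hcontD : ContinuousOn (Df q a b c) (Set.Icc xL xU) := by
    intro x hx
    have hx0 : 0 < x := lt_of_lt_of_le hxLpos' hx.1
    exact ((D_hasDeriv q a b c hx0).continuousAt).continuousWithinAt
  have hIVT := intermediate_value_Ioo' hxLU.le hcontD
  have h0mem : (0:ℝ) ∈ Set.Ioo (Df q a b c xU) (Df q a b c xL) := ⟨hDxU, hDxL⟩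
  obtain ⟨xs, hxsIoo, hDxs⟩ := hIVT h0mem
  have hxs_pos : 0 < xs := lt_trans hxLpos' hxsIoo.1
  have hDpos : ∀ x, 0 < x → x < xs → 0 < Df q a b c x := by
    intro x hx hlt
    rw [← hDxs]
    exact hanti (Set.mem_Ioi.mpr hx) (Set.mem_Ioi.mpr hxs_pos) hlt
  have hDneg : ∀ x, xs < x → Df q a b c x < 0 := by
    intro x hlt
    rw [← hDxs]
    exact hanti (Set.mem_Ioi.mpr hxs_pos) (Set.mem_Ioi.mpr (lt_trans hxs_pos hlt)) hlt
  have hmono : StrictMonoOn (Lf q a b c) (Set.Ioc 0 xs) := by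
    refine strictMonoOn_of_deriv_pos (convex_Ioc 0 xs) ?_ ?_
    · intro x hx
      exact ((L_hasDeriv q a b c hx.1).continuousAt).continuousWithinAt
    · intro x hx
      rw [interior_Ioc] at hx
      rw [(L_hasDeriv q a b c hx.1).deriv]
      exact hDpos x hx.1 hx.2
  have hants : StrictAntiOn (Lf q a b c) (Set.Ici xs) := by
    refine strictAntiOn_of_deriv_neg (convex_Ici xs) ?_ ?_
    · intro x hx
      exact ((L_hasDeriv q a b c (lt_of_lt_of_le hxs_pos hx)).continuousAt).continuousWithinAt
    · intro x hx
      rw [interior_Ici] at hx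
      rw [(L_hasDeriv q a b c (lt_trans hxs_pos hx)).deriv]
      exact hDneg x hx
  have key : ∀ y, 0 < y → y ≠ xs → Lf q a b c y < Lf q a b c xs := by
    intro y hy hne
    rcases lt_or_gt_of_ne hne with hlt | hgt
    · exact hmono ⟨hy, hlt.le⟩ ⟨hxs_pos, le_refl xs⟩ hlt
    · exact hants self_mem_Ici hgt.le hgt
  have hmax : IsMaxOn f (Set.Ioi 0) xs := by
    refine isMaxOn_iff.mpr fun y hy => ?_
    rw [hfexp y hy, hfexp xs hxs_pos]
    rcases eq_or_ne y xs with rfl | hne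
    · exact le_refl _
    · exact (Real.exp_lt_exp.mpr (key y hy hne)).le
  refine ⟨xs, ⟨Set.mem_Ioi.mpr hxs_pos, hmax, ?_, ?_⟩, ?_⟩
  · exact hxsIoo.1
  · exact hxsIoo.2
  · intro y hy hymax
    by_contra hne
    have h1 := key y hy hne
    have h2 : f xs ≤ f y := (isMaxOn_iff.mp hymax) xs (Set.mem_Ioi.mpr hxs_pos)
    rw [hfexp y hy, hfexp xs hxs_pos] at h2
    exact absurd h2 (not_le.mpr (Real.exp_lt_exp.mpr h1))
end
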